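/- Let k ≥ 1, let U be a nonempty cone in ℝ^k, and let α and β satisfy the stated conditions. For any A' > A > 0 and B' > B > 0 there exist σ, τ > 0 and a constant C such that ρ_{U,A',B'}(z) − ρ_{U,A,B}(z) + C ≥ σ·|z|^τ for all z ∈ ℂ^k. -/

import Mathlib

open MeasureTheory Set Filter
open scoped ENNReal

noncomputable section

/-- `ℝ^k` with the uniform (sup) norm. -/
abbrev RV (k : ℕ) := Fin k → ℝ
/-- `ℂ^k` with the uniform (sup) norm. -/
abbrev CV (k : ℕ) := Fin k → ℂ

/-- Real part of a point of `ℂ^k`. -/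
def reP {k : ℕ} (z : CV k) : RV k := fun j => (z j).re
/-- Imaginary part of a point of `ℂ^k`. -/
def imP {k : ℕ} (z : CV k) : RV k := fun j => (z j).im

/-- A (nonempty) cone in `ℝ^k`. -/
def IsConeSet {k : ℕ} (U : Set (RV k)) : Prop :=
  U.Nonempty ∧ ∀ x ∈ U, ∀ t : ℝ, 0 < t → t • x ∈ U

/-- `W` is a conic neighborhood of the cone `U`: `W` is a cone containing `U`
whose projection to the unit sphere is open. -/
def ConicNbhd {k : ℕ} (W U : Set (RV k)) : Prop :=
  IsConeSet W ∧ U ⊆ W ∧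
    IsOpen {p : Metric.sphere (0 : RV k) 1 |
      ∃ x ∈ W, x ≠ 0 ∧ ‖x‖⁻¹ • x = (p : RV k)}

/-- The weight function `ρ_{U,A,B}(x+iy) = -α(|x|/A) + β(B|y|) + β(B δ_U(x))`. -/
def rhoW {k : ℕ} (α β : ℝ → ℝ) (U : Set (RV k)) (A B : ℝ) (z : CV k) : ℝ :=
  -α (‖reP z‖ / A) + β (B * ‖imP z‖) + β (B * Metric.infDist (reP z) U)

/-- `‖f‖_{U,A,B} = sup_z |f(z)| e^{-ρ_{U,A,B}(z)}`, as a value in `ℝ≥0∞`. -/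
def supNorm {k : ℕ} (α β : ℝ → ℝ) (U : Set (RV k)) (A B : ℝ) (f : CV k → ℂ) : ℝ≥0∞ :=
  ⨆ z : CV k, ENNReal.ofReal (‖f z‖ * Real.exp (-(rhoW α β U A B z)))

/-- `‖f‖'_{U,A,B} = (∫ |f(z)|² e^{-2ρ_{U,A,B}(z)} dλ(z))^{1/2}`, as a value in `ℝ≥0∞`. -/
def l2Norm {k : ℕ} (α β : ℝ → ℝ) (U : Set (RV k)) (A B : ℝ) (f : CV k → ℂ) : ℝ≥0∞ :=
  (∫⁻ z : CV k, ENNReal.ofReal (‖f z‖ ^ 2 * Real.exp (-(2 * rhoW α β U A B z)))) ^ (1/2 : ℝ)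

/-- The standing assumptions on the indicator functions `α`, `β`:
unbounded, continuous, (strictly) monotonically increasing on `[0,∞)`, `β` convex,
and `α(s)/s^κ` nondecreasing for large `s` for some `κ > 0`. -/
structure GoodPair (α β : ℝ → ℝ) : Prop where
  alpha_cont : ContinuousOn α (Ici 0)
  alpha_mono : StrictMonoOn α (Ici 0)
  alpha_unbdd : ∀ M : ℝ, ∃ s : ℝ, 0 ≤ s ∧ M < α s
  beta_cont : ContinuousOn β (Ici 0)
  beta_mono : StrictMonoOn β (Ici 0)
  beta_unbdd : ∀ M : ℝ, ∃ s : ℝ, 0 ≤ s ∧ M < β s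
  beta_convex : ConvexOn ℝ (Ici 0) β
  kappa : ∃ κ : ℝ, 0 < κ ∧ ∃ s₀ : ℝ, 0 < s₀ ∧
    MonotoneOn (fun s : ℝ => α s / s ^ κ) (Ici s₀)

/-- Nontriviality of the space `E^β_α(ℝ^k)`. -/
def NontrivialE (k : ℕ) (α β : ℝ → ℝ) : Prop :=
  ∃ A₀ B₀ : ℝ, 0 < A₀ ∧ 0 < B₀ ∧ ∃ f₀ : CV k → ℂ,
    Differentiable ℂ f₀ ∧ f₀ ≠ 0 ∧ supNorm α β Set.univ A₀ B₀ f₀ < ⊤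

/-- Plurisubharmonic: upper semicontinuous and satisfying the sub-mean-value
property on every complex line. -/
def Plurisubharmonic {k : ℕ} (ρ : CV k → ℝ) : Prop :=
  UpperSemicontinuous ρ ∧ ∀ z w : CV k,
    ρ z ≤ (1 / (2 * Real.pi)) *
      ∫ θ in (0:ℝ)..(2 * Real.pi), ρ (z + Complex.exp (θ * Complex.I) • w)

/-- `f` belongs to `V(ℝ^k)`: entire with `‖f‖_{ℝ^k,A,B} < ∞` for some `A, B > 0`. -/
def MemV0 {k : ℕ} (α β : ℝ → ℝ) (f : CV k → ℂ) : Prop :=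
  Differentiable ℂ f ∧ ∃ A B : ℝ, 0 < A ∧ 0 < B ∧ supNorm α β Set.univ A B f < ⊤

/-- `f` belongs to `V(K)`: entire with `‖f‖_{W,A,B} < ∞` for some `A, B > 0`
and some conic neighborhood `W` of `K`. -/
def MemVK {k : ℕ} (α β : ℝ → ℝ) (K : Set (RV k)) (f : CV k → ℂ) : Prop :=
  Differentiable ℂ f ∧ ∃ A B : ℝ, 0 < A ∧ 0 < B ∧
    ∃ W : Set (RV k), ConicNbhd W K ∧ supNorm α β W A B f < ⊤

/-- `u` is linear on the subspace cut out by `P`. -/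
def LinearOnP {k : ℕ} (P : (CV k → ℂ) → Prop) (u : (CV k → ℂ) → ℂ) : Prop :=
  (∀ f g : CV k → ℂ, P f → P g → u (f + g) = u f + u g) ∧
  (∀ (c : ℂ) (f : CV k → ℂ), P f → u (c • f) = c * u f)

/-- Continuity of a linear functional on `V(ℝ^k)`. -/
def ContV0 {k : ℕ} (α β : ℝ → ℝ) (u : (CV k → ℂ) → ℂ) : Prop :=
  ∀ A B : ℝ, 0 < A → 0 < B → ∃ C : ℝ, 0 < C ∧ ∀ f : CV k → ℂ, MemV0 α β f →
    supNorm α β Set.univ A B f < ⊤ → ‖u f‖ ≤ C * (supNorm α β Set.univ A B f).toReal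

/-- Continuity of a linear functional on `V(K)`. -/
def ContVK {k : ℕ} (α β : ℝ → ℝ) (K : Set (RV k)) (v : (CV k → ℂ) → ℂ) : Prop :=
  ∀ A B : ℝ, 0 < A → 0 < B → ∀ W : Set (RV k), ConicNbhd W K →
    ∃ C : ℝ, 0 < C ∧ ∀ f : CV k → ℂ, MemVK α β K f →
      supNorm α β W A B f < ⊤ → ‖v f‖ ≤ C * (supNorm α β W A B f).toReal

/-- The closed cone `K` is a carrier cone of `u`: `u` extends to a continuous
linear functional on `V(K)`. -/
def CarrierCone {k : ℕ} (α β : ℝ → ℝ) (u : (CV k → ℂ) → ℂ) (K : Set (RV k)) : Prop :=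
  IsClosed K ∧ IsConeSet K ∧ ∃ v : (CV k → ℂ) → ℂ,
    (∀ f : CV k → ℂ, MemV0 α β f → v f = u f) ∧
    LinearOnP (MemVK α β K) v ∧ ContVK α β K v


set_option maxHeartbeats 2000000 in
/-- the difference `ρ_{U,A',B'} - ρ_{U,A,B}` grows at least like
`σ|z|^τ`. -/
theorem rho_difference_growth {k : ℕ} (hk : 1 ≤ k) (U : Set (RV k)) (hU : IsConeSet U)
    (α β : ℝ → ℝ) (hαβ : GoodPair α β)
    (A A' B B' : ℝ) (hA : 0 < A) (hAA' : A < A') (hB : 0 < B) (hBB' : B < B') :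
    ∃ σ τ : ℝ, 0 < σ ∧ 0 < τ ∧ ∃ C : ℝ, ∀ z : CV k,
      σ * ‖z‖ ^ τ ≤ rhoW α β U A' B' z - rhoW α β U A B z + C := by
  obtain ⟨κ, hκ, s₀, hs₀, hmono⟩ := hαβ.kappa
  have hApos' : 0 < A' := hA.trans hAA'
  have hB'pos : 0 < B' := hB.trans hBB'
  -- Choose s₁ ≥ max s₀ 1 with α s₁ > 0
  obtain ⟨s₁, hs₁0, hs₁⟩ := hαβ.alpha_unbdd (max 0 (α (max s₀ 1)))
  have hmax0 : (0:ℝ) ≤ max s₀ 1 := le_max_of_le_right zero_le_one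
  have hαs₁pos : 0 < α s₁ := lt_of_le_of_lt (le_max_left _ _) hs₁
  have hs₁gt : max s₀ 1 < s₁ := by
    by_contra h
    push_neg at h
    have h2 : α s₁ ≤ α (max s₀ 1) := hαβ.alpha_mono.monotoneOn hs₁0 hmax0 h
    exact absurd (lt_of_le_of_lt (le_max_right _ _) hs₁) (not_lt.mpr h2)
  have hs₁s₀ : s₀ ≤ s₁ := le_of_lt (lt_of_le_of_lt (le_max_left _ _) hs₁gt)
  have hs₁1 : (1:ℝ) ≤ s₁ := le_of_lt (lt_of_le_of_lt (le_max_right _ _) hs₁gt)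
  have hs₁pos : 0 < s₁ := lt_of_lt_of_le one_pos hs₁1
  have hcpos : 0 < α s₁ / s₁ ^ κ := div_pos hαs₁pos (Real.rpow_pos_of_pos hs₁pos κ)
  set c : ℝ := α s₁ / s₁ ^ κ with hc
  -- polynomial lower bound for α
  have hαlow : ∀ s, s₁ ≤ s → c * s ^ κ ≤ α s := by
    intro s hs
    have hspos : 0 < s := lt_of_lt_of_le hs₁pos hs
    have h := hmono (show s₁ ∈ Ici s₀ from hs₁s₀) (show s ∈ Ici s₀ from hs₁s₀.trans hs) hs
    have hsp : 0 < s ^ κ := Real.rpow_pos_of_pos hspos κ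
    calc c * s ^ κ ≤ (α s / s ^ κ) * s ^ κ := mul_le_mul_of_nonneg_right h hsp.le
      _ = α s := div_mul_cancel₀ _ hsp.ne'
  set R : ℝ := (A' / A) ^ κ with hR
  have hR1 : 1 < R := by
    have h1 : (1:ℝ) < A' / A := (one_lt_div hA).mpr hAA'
    calc (1:ℝ) = 1 ^ κ := (Real.one_rpow κ).symm
      _ < (A' / A) ^ κ := Real.rpow_lt_rpow zero_le_one h1 hκ
  have hA'κpos : 0 < A' ^ κ := Real.rpow_pos_of_pos hApos' κ
  have hc₁pos : 0 < c * (R - 1) / A' ^ κ := by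
    apply div_pos (mul_pos hcpos (by linarith)) hA'κpos
  set c₁ : ℝ := c * (R - 1) / A' ^ κ with hc₁
  -- the α-gap on large r
  have hαgap : ∀ r : ℝ, A' * s₁ ≤ r → c₁ * r ^ κ ≤ α (r / A) - α (r / A') := by
    intro r hr
    have hrpos : 0 < r := lt_of_lt_of_le (by positivity) hr
    have h1 : s₁ ≤ r / A' := (le_div_iff₀ hApos').mpr (by linarith [mul_comm A' s₁])
    have h2 : r / A' ≤ r / A := by
      apply div_le_div_of_nonneg_left hrpos.le hA hAA'.le
    have hmemA' : r / A' ∈ Ici s₀ := le_trans hs₁s₀ h1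
    have hmemA : r / A ∈ Ici s₀ := le_trans hmemA' h2
    have hm := hmono hmemA' hmemA h2
    have hpA' : 0 < r / A' := div_pos hrpos hApos'
    have hpA : 0 < r / A := div_pos hrpos hA
    have hp : 0 < (r / A') ^ κ := Real.rpow_pos_of_pos hpA' κ
    have hq : 0 < (r / A) ^ κ := Real.rpow_pos_of_pos hpA κ
    have hcross : α (r / A') * (r / A) ^ κ ≤ α (r / A) * (r / A') ^ κ := by
      rw [div_le_div_iff₀ hp hq] at hm
      linarith
    have hAκpos : 0 < A ^ κ := Real.rpow_pos_of_pos hA κ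
    have hrκpos : 0 < r ^ κ := Real.rpow_pos_of_pos hrpos κ
    have hqp : (r / A) ^ κ = R * (r / A') ^ κ := by
      rw [hR, Real.div_rpow hrpos.le hA.le, Real.div_rpow hrpos.le hApos'.le,
        Real.div_rpow hApos'.le hA.le]
      field_simp
    have ha'R : α (r / A') * R ≤ α (r / A) := by
      rw [hqp] at hcross
      have := le_of_mul_le_mul_right (by linarith : α (r / A') * R * (r / A') ^ κ ≤ α (r / A) * (r / A') ^ κ) hp
      linarith
    have hlow' : c * (r / A') ^ κ ≤ α (r / A') := hαlow _ h1
    have hc₁eq : c₁ * r ^ κ = c * (R - 1) * (r / A') ^ κ := by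
      rw [hc₁, Real.div_rpow hrpos.le hApos'.le]
      field_simp
    rw [hc₁eq]
    nlinarith [mul_nonneg (sub_nonneg.mpr hlow') (le_of_lt (sub_pos.mpr hR1))]
  set D₁ : ℝ := c₁ * (A' * s₁) ^ κ with hD₁
  have hD₁0 : 0 ≤ D₁ := by
    apply mul_nonneg hc₁pos.le (Real.rpow_nonneg (by positivity) κ)
  have hαfull : ∀ r : ℝ, 0 ≤ r → c₁ * r ^ κ - D₁ ≤ α (r / A) - α (r / A') := by
    intro r hr
    rcases le_or_gt r (A' * s₁) with h | h
    · have h2 : r / A' ≤ r / A := div_le_div_of_nonneg_left hr hA hAA'.le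
      have hgap0 : α (r / A') ≤ α (r / A) :=
        hαβ.alpha_mono.monotoneOn (div_nonneg hr hApos'.le) (div_nonneg hr hA.le) h2
      have hrκ : r ^ κ ≤ (A' * s₁) ^ κ := Real.rpow_le_rpow hr h hκ.le
      nlinarith
    · have := hαgap r h.le
      linarith
  -- β part
  obtain ⟨t₁, ht₁0, ht₁⟩ := hαβ.beta_unbdd (β 0)
  have ht₁pos : 0 < t₁ := by
    rcases eq_or_lt_of_le ht₁0 with h | h
    · exact absurd ht₁ (by rw [← h]; exact lt_irrefl _)
    · exact h
  have hmpos : 0 < (β t₁ - β 0) / t₁ := div_pos (sub_pos.mpr ht₁) ht₁pos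
  set m : ℝ := (β t₁ - β 0) / t₁ with hm
  have hβlin : ∀ t : ℝ, 0 ≤ t → m * t - m * t₁ ≤ β t - β 0 := by
    intro t ht
    rcases le_or_gt t t₁ with h | h
    · have hb0 : β 0 ≤ β t := hαβ.beta_mono.monotoneOn Set.self_mem_Ici ht ht
      have hmt := mul_le_mul_of_nonneg_left h hmpos.le
      linarith
    · have htpos : 0 < t := ht₁pos.trans h
      have hbt : t₁ / t ≤ 1 := (div_le_one htpos).mpr h.le
      have hconv := hαβ.beta_convex.2 Set.self_mem_Ici
        (show t ∈ Ici 0 from ht) (by linarith : (0:ℝ) ≤ 1 - t₁ / t)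
        (by positivity : (0:ℝ) ≤ t₁ / t) (by ring)
      have harg : (1 - t₁ / t) • (0:ℝ) + (t₁ / t) • t = t₁ := by
        simp only [smul_eq_mul, mul_zero, zero_add]
        field_simp
      rw [harg] at hconv
      have hmul := mul_le_mul_of_nonneg_left hconv htpos.le
      have h3 : t * ((1 - t₁ / t) • β 0 + (t₁ / t) • β t) = (t - t₁) * β 0 + t₁ * β t := by
        simp only [smul_eq_mul]
        field_simp
      rw [h3] at hmul
      rw [hm, div_mul_eq_mul_div, div_mul_eq_mul_div, ← sub_div, div_le_iff₀ ht₁pos]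
      have hx0 : (0:ℝ) ≤ (β t₁ - β 0) * t₁ :=
        mul_nonneg (sub_nonneg.mpr ht₁.le) ht₁pos.le
      nlinarith [hmul, hx0]
  have hc₂pos : 0 < (1 - B / B') * m * B' := by
    have : B / B' < 1 := (div_lt_one hB'pos).mpr hBB'
    apply mul_pos (mul_pos (by linarith) hmpos) hB'pos
  set c₂ : ℝ := (1 - B / B') * m * B' with hc₂
  set D₂ : ℝ := (1 - B / B') * m * t₁ with hD₂
  have hD₂0 : 0 ≤ D₂ := by
    have : B / B' < 1 := (div_lt_one hB'pos).mpr hBB'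
    apply mul_nonneg (mul_nonneg (by linarith) hmpos.le) ht₁pos.le
  have hβB : ∀ t : ℝ, 0 ≤ t → c₂ * t - D₂ ≤ β (B' * t) - β (B * t) := by
    intro t ht
    have hb1 : B / B' < 1 := (div_lt_one hB'pos).mpr hBB'
    have hconv := hαβ.beta_convex.2 Set.self_mem_Ici
      (Set.mem_Ici.mpr (by positivity) : B' * t ∈ Ici 0)
      (by linarith : (0:ℝ) ≤ 1 - B / B')
      (by positivity : (0:ℝ) ≤ B / B') (by ring)
    have harg : (1 - B / B') • (0:ℝ) + (B / B') • (B' * t) = B * t := by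
      simp only [smul_eq_mul]
      field_simp
      ring
    rw [harg] at hconv
    simp only [smul_eq_mul] at hconv
    have hlin := hβlin (B' * t) (by positivity)
    have hkey := mul_le_mul_of_nonneg_left hlin (by linarith : (0:ℝ) ≤ 1 - B / B')
    rw [hc₂, hD₂]
    nlinarith [hconv, hkey]
  -- δ part
  have hδ : ∀ d : ℝ, 0 ≤ d → 0 ≤ β (B' * d) - β (B * d) := by
    intro d hd
    have h1 : B * d ≤ B' * d := mul_le_mul_of_nonneg_right hBB'.le hd
    exact sub_nonneg.mpr (hαβ.beta_mono.monotoneOn (mul_nonneg hB.le hd)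
      (mul_nonneg hB'pos.le hd) h1)
  -- combine
  have hτpos : 0 < min κ 1 := lt_min hκ one_pos
  have hσpos : 0 < min c₁ c₂ := lt_min hc₁pos hc₂pos
  refine ⟨min c₁ c₂, min κ 1, hσpos, hτpos, D₁ + D₂ + 2 * min c₁ c₂, fun z => ?_⟩
  have hx : (0:ℝ) ≤ ‖reP z‖ := norm_nonneg _
  have hy : (0:ℝ) ≤ ‖imP z‖ := norm_nonneg _
  have hd : (0:ℝ) ≤ Metric.infDist (reP z) U := Metric.infDist_nonneg
  have h1 := hαfull ‖reP z‖ hx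
  have h2 := hβB ‖imP z‖ hy
  have h3 := hδ (Metric.infDist (reP z) U) hd
  have hzxy : ‖z‖ ≤ ‖reP z‖ + ‖imP z‖ := by
    apply (pi_norm_le_iff_of_nonneg (by positivity)).mpr
    intro j
    calc ‖z j‖ ≤ |(z j).re| + |(z j).im| := Complex.norm_le_abs_re_add_abs_im _
      _ ≤ ‖reP z‖ + ‖imP z‖ :=
        add_le_add (norm_le_pi_norm (reP z) j) (norm_le_pi_norm (imP z) j)
  have hxκ : (0:ℝ) ≤ ‖reP z‖ ^ κ := Real.rpow_nonneg hx κ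
  have hzτ : ‖z‖ ^ (min κ 1) ≤ ‖reP z‖ ^ κ + ‖imP z‖ + 2 := by
    have h4 : ‖z‖ ^ (min κ 1) ≤ (‖reP z‖ + ‖imP z‖) ^ (min κ 1) :=
      Real.rpow_le_rpow (norm_nonneg z) hzxy hτpos.le
    have h5 : (‖reP z‖ + ‖imP z‖) ^ (min κ 1) ≤ ‖reP z‖ ^ (min κ 1) + ‖imP z‖ ^ (min κ 1) := by
      have h := NNReal.rpow_add_le_add_rpow ‖reP z‖.toNNReal ‖imP z‖.toNNReal hτpos.le
        (min_le_right κ 1)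
      have h' := NNReal.coe_le_coe.mpr h
      simpa [NNReal.coe_rpow, Real.coe_toNNReal, hx, hy, Real.toNNReal_add hx hy] using h'
    have h6 : ‖reP z‖ ^ (min κ 1) ≤ ‖reP z‖ ^ κ + 1 := by
      rcases le_or_gt ‖reP z‖ 1 with h | h
      · have := Real.rpow_le_one hx h hτpos.le
        linarith
      · have := Real.rpow_le_rpow_of_exponent_le h.le (min_le_left κ 1)
        linarith
    have h7 : ‖imP z‖ ^ (min κ 1) ≤ ‖imP z‖ + 1 := by
      rcases le_or_gt ‖imP z‖ 1 with h | h
      · have := Real.rpow_le_one hy h hτpos.le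
        linarith
      · have h' := Real.rpow_le_rpow_of_exponent_le h.le (min_le_right κ 1)
        rw [Real.rpow_one] at h'
        linarith
    linarith
  have hdiff : rhoW α β U A' B' z - rhoW α β U A B z
      = (α (‖reP z‖ / A) - α (‖reP z‖ / A'))
        + (β (B' * ‖imP z‖) - β (B * ‖imP z‖))
        + (β (B' * Metric.infDist (reP z) U) - β (B * Metric.infDist (reP z) U)) := by
    simp only [rhoW]
    ring
  rw [hdiff]
  have hσ1 : min c₁ c₂ ≤ c₁ := min_le_left _ _
  have hσ2 : min c₁ c₂ ≤ c₂ := min_le_right _ _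
  have hm1 := mul_le_mul_of_nonneg_right hσ1 hxκ
  have hm2 := mul_le_mul_of_nonneg_right hσ2 hy
  have hm3 := mul_le_mul_of_nonneg_left hzτ hσpos.le
  linarith [hm1, hm2, hm3, h1, h2, h3]

end
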